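/- Let X be strongly regular with parameters (v,k;a,c), c ≥ 1, and set δ = a − c. Then k + δ + √((k−δ)² − 4c) is an eigenvalue of the adjacency matrix of the symmetric square X^{ {2} }, and it equals the spectral radius of X^{ {2} }. -/

import Mathlib

attribute [local instance] Classical.propDecidable

/-- The symmetric square of a graph: vertices are the 2-subsets of `V`,
two 2-subsets being adjacent iff their symmetric difference is an edge. -/
def symSq {V : Type*} [DecidableEq V] (X : SimpleGraph V) :
    SimpleGraph {s : Finset V // s.card = 2} where
  Adj s t := ∃ x y, X.Adj x y ∧ symmDiff s.1 t.1 = {x, y}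
  symm := by
    constructor
    rintro s t ⟨x, y, hxy, h⟩
    exact ⟨x, y, hxy, by rwa [symmDiff_comm]⟩
  loopless := by
    constructor
    rintro s ⟨x, y, hxy, h⟩
    rw [symmDiff_self] at h
    have hx : x ∈ (⊥ : Finset V) := h ▸ Finset.mem_insert_self x {y}
    simp at hx

section Aux
variable {V : Type*} [DecidableEq V] [Fintype V] (X : SimpleGraph V)

lemma sdiff_pair_pair {u w q : V} (huw : u ≠ w) (hq : q ≠ u) (hwq : w ≠ q) :
    symmDiff ({u, w} : Finset V) {u, q} = {w, q} := by
  ext z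
  simp only [Finset.mem_symmDiff, Finset.mem_insert, Finset.mem_singleton]
  constructor
  · rintro (⟨rfl | rfl, h2⟩ | ⟨rfl | rfl, h2⟩) <;> push_neg at h2 <;> tauto
  · rintro (rfl | rfl)
    · exact Or.inl ⟨Or.inr rfl, by push_neg; exact ⟨fun h => huw h.symm, hwq⟩⟩
    · exact Or.inr ⟨Or.inr rfl, by push_neg; exact ⟨hq, fun h => hwq h.symm⟩⟩

lemma symSq_adj_char {u w : V} (hne : u ≠ w) (hs : ({u, w} : Finset V).card = 2)
    (t : {s : Finset V // s.card = 2}) :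
    (symSq X).Adj ⟨{u, w}, hs⟩ t ↔
      (∃ x, x ∉ ({u, w} : Finset V) ∧ X.Adj x w ∧ t.1 = {u, x}) ∨
      (∃ x, x ∉ ({u, w} : Finset V) ∧ X.Adj x u ∧ t.1 = {w, x}) := by
  have pair_not_mem : ∀ {z : V}, z ≠ u → z ≠ w → z ∉ ({u, w} : Finset V) := by
    intro z h1 h2
    simp only [Finset.mem_insert, Finset.mem_singleton]; push_neg; exact ⟨h1, h2⟩
  constructor
  · rintro ⟨x, y, hxy, h⟩
    have h' : symmDiff ({u, w} : Finset V) t.1 = {x, y} := h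
    clear h
    have hxyne : x ≠ y := hxy.ne
    by_cases hu : u ∈ t.1 <;> by_cases hw : w ∈ t.1
    · have hsub : ({u, w} : Finset V) ⊆ t.1 := by
        intro z hz; simp only [Finset.mem_insert, Finset.mem_singleton] at hz
        rcases hz with rfl | rfl <;> assumption
      have heq : ({u, w} : Finset V) = t.1 :=
        Finset.eq_of_subset_of_card_le hsub (by rw [hs, t.2])
      rw [heq, symmDiff_self] at h'
      have : x ∈ (⊥ : Finset V) := h' ▸ Finset.mem_insert_self x {y}
      simp at this
    · -- u ∈ t, w ∉ t
      obtain ⟨p, q, hpq, ht⟩ := Finset.card_eq_two.mp t.2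
      rw [ht] at hu hw
      simp only [Finset.mem_insert, Finset.mem_singleton] at hu hw
      push_neg at hw
      obtain ⟨r, hru, hwr, htr⟩ : ∃ r, r ≠ u ∧ w ≠ r ∧ t.1 = {u, r} := by
        rcases hu with rfl | rfl
        · exact ⟨q, hpq.symm, hw.2, ht⟩
        · exact ⟨p, hpq, hw.1, by rw [ht, Finset.pair_comm]⟩
      rw [htr, sdiff_pair_pair hne hru hwr] at h'
      have hwmem : w ∈ ({x, y} : Finset V) := h' ▸ Finset.mem_insert_self w {r}
      have hrmem : r ∈ ({x, y} : Finset V) := h' ▸ (by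
        simp)
      simp only [Finset.mem_insert, Finset.mem_singleton] at hwmem hrmem
      have hadj : X.Adj r w := by
        rcases hwmem with rfl | rfl <;> rcases hrmem with h1 | h1
        · exact absurd h1 (fun hh => hwr hh.symm)
        · rw [h1]; exact hxy.symm
        · rw [h1]; exact hxy
        · exact absurd h1 (fun hh => hwr hh.symm)
      exact Or.inl ⟨r, pair_not_mem hru (fun hh => hwr hh.symm), hadj, htr⟩
    · -- w ∈ t, u ∉ t
      obtain ⟨p, q, hpq, ht⟩ := Finset.card_eq_two.mp t.2
      rw [ht] at hu hw
      simp only [Finset.mem_insert, Finset.mem_singleton] at hu hw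
      push_neg at hu
      obtain ⟨r, hrw, hur, htr⟩ : ∃ r, r ≠ w ∧ u ≠ r ∧ t.1 = {w, r} := by
        rcases hw with rfl | rfl
        · exact ⟨q, hpq.symm, hu.2, ht⟩
        · exact ⟨p, hpq, hu.1, by rw [ht, Finset.pair_comm]⟩
      rw [Finset.pair_comm, htr, sdiff_pair_pair hne.symm hrw hur] at h'
      have humem : u ∈ ({x, y} : Finset V) := h' ▸ Finset.mem_insert_self u {r}
      have hrmem : r ∈ ({x, y} : Finset V) := h' ▸ (by
        simp)
      simp only [Finset.mem_insert, Finset.mem_singleton] at humem hrmem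
      have hadj : X.Adj r u := by
        rcases humem with rfl | rfl <;> rcases hrmem with h1 | h1
        · exact absurd h1 (fun hh => hur hh.symm)
        · rw [h1]; exact hxy.symm
        · rw [h1]; exact hxy
        · exact absurd h1 (fun hh => hur hh.symm)
      exact Or.inr ⟨r, pair_not_mem (fun hh => hur hh.symm) hrw, hadj, htr⟩
    · -- neither
      exfalso
      obtain ⟨p, q, hpq, ht⟩ := Finset.card_eq_two.mp t.2
      rw [ht] at hu hw
      simp only [Finset.mem_insert, Finset.mem_singleton] at hu hw
      push_neg at hu hw
      rw [ht] at h'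
      have hums : u ∈ ({x, y} : Finset V) := by
        rw [← h']
        simp only [Finset.mem_symmDiff, Finset.mem_insert, Finset.mem_singleton]
        tauto
      have hwms : w ∈ ({x, y} : Finset V) := by
        rw [← h']
        simp only [Finset.mem_symmDiff, Finset.mem_insert, Finset.mem_singleton]
        tauto
      have hpms : p ∈ ({x, y} : Finset V) := by
        rw [← h']
        simp only [Finset.mem_symmDiff, Finset.mem_insert, Finset.mem_singleton]
        have h1 : p ≠ u := fun hh => hu.1 hh.symm
        have h2 : p ≠ w := fun hh => hw.1 hh.symm
        tauto
      have hqms : q ∈ ({x, y} : Finset V) := by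
        rw [← h']
        simp only [Finset.mem_symmDiff, Finset.mem_insert, Finset.mem_singleton]
        have h1 : q ≠ u := fun hh => hu.2 hh.symm
        have h2 : q ≠ w := fun hh => hw.2 hh.symm
        tauto
      simp only [Finset.mem_insert, Finset.mem_singleton] at hums hwms hpms hqms
      rcases hums with rfl | rfl <;> rcases hwms with h1 | h1 <;>
        rcases hpms with h2 | h2 <;> rcases hqms with h3 | h3 <;>
        first
          | exact hne h1.symm
          | exact hne h1
          | exact hpq (h2.trans h3.symm)
          | exact hu.1 h2.symm
          | exact hu.2 h3.symm
          | exact hw.1 h2.symm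
          | exact hw.2 h3.symm
          | (subst h1; first
              | exact hpq (h2.trans h3.symm)
              | exact hu.1 h2.symm
              | exact hu.2 h3.symm
              | exact hw.1 h2.symm
              | exact hw.2 h3.symm)
  · rintro (⟨x, hx, hadj, ht⟩ | ⟨x, hx, hadj, ht⟩) <;>
      simp only [Finset.mem_insert, Finset.mem_singleton] at hx <;> push_neg at hx
    · exact ⟨w, x, hadj.symm, by
        show symmDiff ({u, w} : Finset V) t.1 = {w, x}
        rw [ht, sdiff_pair_pair hne hx.1 (fun hh => hx.2 hh.symm)]⟩
    · exact ⟨u, x, hadj.symm, by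
        show symmDiff ({u, w} : Finset V) t.1 = {u, x}
        rw [Finset.pair_comm, ht, sdiff_pair_pair hne.symm hx.2 (fun hh => hx.1 hh.symm)]⟩

end Aux

section Aux2
variable {V : Type*} [DecidableEq V] [Fintype V]

/-- generic "sum over 2-subsets with unique-witness condition" lemma -/
lemma sum_twoSet_pair (u w : V) (C : V → Prop)
    {DP : ∀ t : {s : Finset V // s.card = 2}, Decidable (∃ x, C x ∧ t.1 = ({u, x} : Finset V))}
    {DC : ∀ x : V, Decidable (C x)}
    (hC : ∀ x, C x → x ∉ ({u, w} : Finset V))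
    (F : Finset V → ℝ) :
    ∑ t : {s : Finset V // s.card = 2},
        (@ite _ (∃ x, C x ∧ t.1 = ({u, x} : Finset V)) (DP t) (F t.1) (0:ℝ))
      = ∑ x : V, (@ite _ (C x) (DC x) (F {u, x}) (0:ℝ)) := by
  have hcard : ∀ {x : V}, C x → ({u, x} : Finset V).card = 2 := by
    intro x hx
    have : x ≠ u := fun h => hC x hx (by simp [h])
    exact Finset.card_pair (Ne.symm this)
  have huniq : ∀ {x y : V}, C x → C y → ({u, x} : Finset V) = {u, y} → x = y := by
    intro x y hx hy h
    have hxu : x ≠ u := fun hh => hC x hx (by simp [hh])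
    have : x ∈ ({u, y} : Finset V) := h ▸ (by simp)
    simp only [Finset.mem_insert, Finset.mem_singleton] at this
    tauto
  calc ∑ t : {s : Finset V // s.card = 2},
        (@ite _ (∃ x, C x ∧ t.1 = ({u, x} : Finset V)) (DP t) (F t.1) (0:ℝ))
      = ∑ t : {s : Finset V // s.card = 2}, ∑ x : V,
          (if C x ∧ t.1 = ({u, x} : Finset V) then F t.1 else 0) := by
        apply Finset.sum_congr rfl
        intro t _
        by_cases hP : ∃ x, C x ∧ t.1 = ({u, x} : Finset V)
        · obtain ⟨x0, hx0, ht0⟩ := hP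
          rw [if_pos ⟨x0, hx0, ht0⟩]
          rw [Finset.sum_eq_single x0]
          · rw [if_pos ⟨hx0, ht0⟩]
          · intro b _ hb
            rw [if_neg]
            rintro ⟨hb1, hb2⟩
            exact hb (huniq hb1 hx0 (hb2 ▸ ht0 ▸ rfl))
          · intro h; exact absurd (Finset.mem_univ x0) h
        · rw [if_neg hP]
          symm
          apply Finset.sum_eq_zero
          intro x _
          rw [if_neg]
          rintro ⟨h1, h2⟩
          exact hP ⟨x, h1, h2⟩
    _ = ∑ x : V, ∑ t : {s : Finset V // s.card = 2},
          (if C x ∧ t.1 = ({u, x} : Finset V) then F t.1 else 0) := Finset.sum_comm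
    _ = ∑ x : V, (@ite _ (C x) (DC x) (F {u, x}) (0:ℝ)) := by
        apply Finset.sum_congr rfl
        intro x _
        by_cases hx : C x
        · have hc2 := hcard hx
          have : ∀ t : {s : Finset V // s.card = 2},
              (C x ∧ t.1 = ({u, x} : Finset V)) ↔ t = ⟨{u, x}, hc2⟩ := by
            intro t
            constructor
            · rintro ⟨-, h⟩; exact Subtype.ext h
            · rintro rfl; exact ⟨hx, rfl⟩
          simp only [this]
          rw [Finset.sum_ite_eq' Finset.univ (⟨{u, x}, hc2⟩ : {s : Finset V // s.card = 2})
            (fun t => F t.1)]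
          simp [hx]
        · simp [hx]

end Aux2

section Aux3
variable {V : Type*} [DecidableEq V] [Fintype V] {X : SimpleGraph V} [DecidableRel X.Adj]

lemma oneSide_sum {k m : ℕ} (hreg : X.IsRegularOfDegree k)
    {u w : V} (hne : u ≠ w)
    (hcn : Fintype.card (X.commonNeighbors u w) = m) (α β : ℝ)
    {D1 : ∀ x : V, Decidable (x ∉ ({u, w} : Finset V) ∧ X.Adj x w)}
    {D2 : ∀ x : V, Decidable (X.Adj u x)}
    [D3 : Decidable (X.Adj u w)] :
    ∑ x : V, (@ite _ (x ∉ ({u, w} : Finset V) ∧ X.Adj x w) (D1 x)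
        (@ite _ (X.Adj u x) (D2 x) α β) (0:ℝ))
      = if X.Adj u w then α * m + β * ((k : ℝ) - 1 - m) else α * m + β * ((k : ℝ) - m) := by
  classical
  set P : V → Prop := fun x => x ∉ ({u, w} : Finset V) ∧ X.Adj x w with hP
  -- split each summand
  have hsplit : ∀ x : V,
      (@ite _ (x ∉ ({u, w} : Finset V) ∧ X.Adj x w) (D1 x)
          (@ite _ (X.Adj u x) (D2 x) α β) (0:ℝ))
        = (if P x ∧ X.Adj u x then α else 0) + (if P x ∧ ¬ X.Adj u x then β else 0) := by
    intro x
    have hPx : (x ∉ ({u, w} : Finset V) ∧ X.Adj x w) = P x := rfl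
    by_cases h1 : P x <;> by_cases h2 : X.Adj u x
    · rw [if_pos (hPx ▸ h1), if_pos h2, if_pos ⟨h1, h2⟩, if_neg (by tauto), add_zero]
    · rw [if_pos (hPx ▸ h1), if_neg h2, if_neg (by tauto), if_pos ⟨h1, h2⟩, zero_add]
    · rw [if_neg (hPx ▸ h1), if_neg (by tauto), if_neg (by tauto), add_zero]
    · rw [if_neg (hPx ▸ h1), if_neg (by tauto), if_neg (by tauto), add_zero]
  rw [Finset.sum_congr rfl (fun x _ => hsplit x)]
  rw [Finset.sum_add_distrib, ← Finset.sum_filter, ← Finset.sum_filter,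
    Finset.sum_const, Finset.sum_const, nsmul_eq_mul, nsmul_eq_mul]
  -- the first filter is the common neighbors
  have hfilt1 : Finset.univ.filter (fun x => P x ∧ X.Adj u x)
      = (X.commonNeighbors u w).toFinset := by
    ext x
    simp only [Finset.mem_filter, Finset.mem_univ, true_and, Set.mem_toFinset,
      SimpleGraph.mem_commonNeighbors, hP, Finset.mem_insert, Finset.mem_singleton]
    constructor
    · rintro ⟨⟨-, h2⟩, h3⟩; exact ⟨h3, h2.symm⟩
    · rintro ⟨h1, h2⟩
      exact ⟨⟨by push_neg; exact ⟨h1.ne', h2.ne'⟩, h2.symm⟩, h1⟩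
  have hN1 : (Finset.univ.filter (fun x => P x ∧ X.Adj u x)).card = m := by
    rw [hfilt1, Set.toFinset_card, hcn]
  -- total count
  have hfiltP : Finset.univ.filter P = (X.neighborFinset w).erase u := by
    ext x
    simp only [Finset.mem_filter, Finset.mem_univ, true_and, Finset.mem_erase,
      SimpleGraph.mem_neighborFinset, hP, Finset.mem_insert, Finset.mem_singleton]
    constructor
    · rintro ⟨h1, h2⟩; push_neg at h1; exact ⟨h1.1, h2.symm⟩
    · rintro ⟨h1, h2⟩
      exact ⟨by push_neg; exact ⟨h1, h2.ne'⟩, h2.symm⟩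
  have hsum12 : (Finset.univ.filter (fun x => P x ∧ X.Adj u x)).card
      + (Finset.univ.filter (fun x => P x ∧ ¬ X.Adj u x)).card
      = (Finset.univ.filter P).card := by
    have := Finset.card_filter_add_card_filter_not
      (s := Finset.univ.filter P) (p := fun x => X.Adj u x)
    rwa [Finset.filter_filter, Finset.filter_filter] at this
  by_cases hadj : X.Adj u w
  · have humem : u ∈ X.neighborFinset w := by
      rw [SimpleGraph.mem_neighborFinset]; exact hadj.symm
    have hNP : (Finset.univ.filter P).card + 1 = k := by
      rw [hfiltP, Finset.card_erase_add_one humem,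
        SimpleGraph.card_neighborFinset_eq_degree, hreg w]
    have hN2 : ((Finset.univ.filter (fun x => P x ∧ ¬ X.Adj u x)).card : ℝ)
        = (k : ℝ) - 1 - m := by
      have := hsum12
      rw [hN1] at this
      have hk : m + (Finset.univ.filter (fun x => P x ∧ ¬ X.Adj u x)).card + 1 = k := by
        omega
      push_cast [← hk]; ring
    rw [if_pos hadj, hN1, hN2]; ring
  · have humem : u ∉ X.neighborFinset w := by
      rw [SimpleGraph.mem_neighborFinset]; exact fun h => hadj h.symm
    have hNP : (Finset.univ.filter P).card = k := by
      rw [hfiltP, Finset.erase_eq_of_notMem humem,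
        SimpleGraph.card_neighborFinset_eq_degree, hreg w]
    have hN2 : ((Finset.univ.filter (fun x => P x ∧ ¬ X.Adj u x)).card : ℝ)
        = (k : ℝ) - m := by
      have := hsum12
      rw [hN1, hNP] at this
      push_cast [← this]; ring
    rw [if_neg hadj, hN1, hN2]; ring

end Aux3

section Aux4
variable {V : Type*} [DecidableEq V] [Fintype V] {X : SimpleGraph V} [DecidableRel X.Adj]

lemma common_le (k m : ℕ) (hreg : X.IsRegularOfDegree k) {u w : V} (hadj : X.Adj u w)
    (hcn : Fintype.card (X.commonNeighbors u w) = m) : m + 1 ≤ k := by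
  classical
  have hsub : (X.commonNeighbors u w).toFinset ⊆ (X.neighborFinset u).erase w := by
    intro x hx
    rw [Set.mem_toFinset, SimpleGraph.mem_commonNeighbors] at hx
    rw [Finset.mem_erase, SimpleGraph.mem_neighborFinset]
    exact ⟨hx.2.ne', hx.1⟩
  have hwm : w ∈ X.neighborFinset u := by rw [SimpleGraph.mem_neighborFinset]; exact hadj
  have h1 : (X.commonNeighbors u w).toFinset.card ≤ ((X.neighborFinset u).erase w).card :=
    Finset.card_le_card hsub
  rw [Set.toFinset_card, hcn] at h1
  have h2 : ((X.neighborFinset u).erase w).card + 1 = k := by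
    rw [Finset.card_erase_add_one hwm, SimpleGraph.card_neighborFinset_eq_degree, hreg u]
  omega

lemma srg_not_trivial {n k a c : ℕ} (hX : X.IsSRGWith n k a c) (hc : 1 ≤ c)
    (hedge : ∃ u w, X.Adj u w) (hnonadj : ∃ u w, u ≠ w ∧ ¬X.Adj u w) :
    a + 2 ≤ k ∨ 2 ≤ c := by
  classical
  obtain ⟨u0, w0, hadj0⟩ := hedge
  have hk1 : a + 1 ≤ k := common_le k a hX.regular hadj0 (hX.of_adj u0 w0 hadj0)
  by_contra hcon
  push_neg at hcon
  obtain ⟨hka, hc2⟩ := hcon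
  have hkeq : k = a + 1 := by omega
  have hceq : c = 1 := by omega
  obtain ⟨u, w, hne, hnadj⟩ := hnonadj
  have hcc : Fintype.card (X.commonNeighbors u w) = 1 := by
    rw [hX.of_not_adj hne hnadj, hceq]
  have : Nonempty (X.commonNeighbors u w) := by
    rw [← Fintype.card_pos_iff, hcc]; norm_num
  obtain ⟨⟨p, hp⟩⟩ := this
  rw [SimpleGraph.mem_commonNeighbors] at hp
  have hpu : X.Adj p u := hp.1.symm
  have hpw : X.Adj p w := hp.2.symm
  -- commonNeighbors p u has card a = k - 1, and is contained in N(p) \ {u} of card k - 1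
  have heq : (X.commonNeighbors p u).toFinset = (X.neighborFinset p).erase u := by
    apply Finset.eq_of_subset_of_card_le
    · intro x hx
      rw [Set.mem_toFinset, SimpleGraph.mem_commonNeighbors] at hx
      rw [Finset.mem_erase, SimpleGraph.mem_neighborFinset]
      exact ⟨hx.2.ne', hx.1⟩
    · have h1 : (X.commonNeighbors p u).toFinset.card = a := by
        rw [Set.toFinset_card, hX.of_adj p u hpu]
      have hum : u ∈ X.neighborFinset p := by rw [SimpleGraph.mem_neighborFinset]; exact hpu
      have h2 : ((X.neighborFinset p).erase u).card + 1 = k := by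
        rw [Finset.card_erase_add_one hum, SimpleGraph.card_neighborFinset_eq_degree,
          hX.regular p]
      omega
  have hwmem : w ∈ (X.neighborFinset p).erase u := by
    rw [Finset.mem_erase, SimpleGraph.mem_neighborFinset]
    exact ⟨hne.symm, hpw⟩
  rw [← heq, Set.mem_toFinset, SimpleGraph.mem_commonNeighbors] at hwmem
  exact hnadj hwmem.2

end Aux4

lemma eigen_alg_adj (kr ar cr r : ℝ) (hr2 : r ^ 2 = (kr - (ar - cr)) ^ 2 - 4 * cr) :
    2 * ((kr + (ar - cr) + r - 2 * kr + 2 * cr) * ar + 2 * cr * (kr - 1 - ar))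
      = (kr + (ar - cr) + r) * (kr + (ar - cr) + r - 2 * kr + 2 * cr) := by
  linear_combination -hr2

lemma eigen_alg_nonadj (kr ar cr r : ℝ) :
    2 * ((kr + (ar - cr) + r - 2 * kr + 2 * cr) * cr + 2 * cr * (kr - cr))
      = (kr + (ar - cr) + r) * (2 * cr) := by ring

lemma alpha_pos_of (kr ar cr r : ℝ) (hr2 : r ^ 2 = (kr - (ar - cr)) ^ 2 - 4 * cr)
    (hr0 : 0 ≤ r) (hc1 : 1 ≤ cr) (h : kr - ar ≥ 2 ∨ (kr - ar ≥ 1 ∧ cr ≥ 2)) :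
    0 < kr + (ar - cr) + r - 2 * kr + 2 * cr := by
  rcases h with h | ⟨h1, h2⟩
  · nlinarith [sq_nonneg (r + (kr - ar - cr)), sq_nonneg (r - (kr - ar - cr))]
  · nlinarith


set_option maxHeartbeats 1000000 in
/-- For a strongly regular graph with parameters `(v,k;a,c)` and `δ = a − c`, the number
`k + δ + √((k−δ)² − 4c)` is an eigenvalue of the adjacency matrix of the symmetric square,
and it is the spectral radius: every eigenvalue `ν` satisfies `|ν| ≤ k + δ + √((k−δ)² − 4c)`. -/
theorem symSq_spectral_radius {v k a c : ℕ} (X : SimpleGraph (Fin v))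
    [DecidableRel X.Adj] (hX : X.IsSRGWith v k a c) (hc : 1 ≤ c)
    (hbot : X ≠ ⊥) (htop : X ≠ ⊤) :
    (∃ z : {s : Finset (Fin v) // s.card = 2} → ℝ, z ≠ 0 ∧
        ((symSq X).adjMatrix ℝ).mulVec z
          = ((k : ℝ) + ((a : ℝ) - c) + Real.sqrt (((k : ℝ) - ((a : ℝ) - c)) ^ 2 - 4 * c)) • z) ∧
      ∀ (ν : ℝ) (z : {s : Finset (Fin v) // s.card = 2} → ℝ), z ≠ 0 →
        ((symSq X).adjMatrix ℝ).mulVec z = ν • z →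
        |ν| ≤ (k : ℝ) + ((a : ℝ) - c) + Real.sqrt (((k : ℝ) - ((a : ℝ) - c)) ^ 2 - 4 * c) := by
  classical
  set r : ℝ := Real.sqrt (((k : ℝ) - ((a : ℝ) - c)) ^ 2 - 4 * c) with hrdef
  set lam : ℝ := (k : ℝ) + ((a : ℝ) - c) + r with hlamdef
  have hedge : ∃ u w, X.Adj u w := by
    by_contra h; push_neg at h
    exact hbot (by ext u w; simp [h u w])
  have hnonadj : ∃ u w, u ≠ w ∧ ¬X.Adj u w := by
    by_contra h; push_neg at h
    refine htop ?_
    ext u w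
    simp only [SimpleGraph.top_adj]
    exact ⟨fun hh => hh.ne, fun hh => h u w hh⟩
  obtain ⟨u0, w0, hadj0⟩ := hedge
  have hk1 : a + 1 ≤ k := common_le k a hX.regular hadj0 (hX.of_adj u0 w0 hadj0)
  have hnt : a + 2 ≤ k ∨ 2 ≤ c := srg_not_trivial hX hc ⟨u0, w0, hadj0⟩ hnonadj
  have hc1 : (1 : ℝ) ≤ (c : ℝ) := by exact_mod_cast hc
  have hka1 : (a : ℝ) + 1 ≤ (k : ℝ) := by exact_mod_cast hk1
  have hD : (0:ℝ) ≤ ((k : ℝ) - ((a : ℝ) - c)) ^ 2 - 4 * c := by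
    nlinarith [sq_nonneg ((c:ℝ) - 1)]
  have hr0 : 0 ≤ r := Real.sqrt_nonneg _
  have hr2 : r ^ 2 = ((k : ℝ) - ((a : ℝ) - c)) ^ 2 - 4 * c := Real.sq_sqrt hD
  set α : ℝ := lam - 2 * k + 2 * c with halphadef
  set β : ℝ := 2 * c with hbetadef
  have hbpos : 0 < β := by rw [hbetadef]; linarith
  have hapos : 0 < α := by
    rw [halphadef, hlamdef]
    apply alpha_pos_of _ _ _ _ hr2 hr0 hc1
    rcases hnt with h | h
    · left
      have : (a:ℝ) + 2 ≤ (k:ℝ) := by exact_mod_cast h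
      linarith
    · right
      refine ⟨by linarith, ?_⟩
      have : (2:ℝ) ≤ (c:ℝ) := by exact_mod_cast h
      linarith
  set F : Finset (Fin v) → ℝ := fun s => if ∃ x ∈ s, ∃ y ∈ s, X.Adj x y then α else β with hFdef
  have hFpair : ∀ x y : Fin v, F ({x, y} : Finset (Fin v)) = if X.Adj x y then α else β := by
    intro x y
    simp only [hFdef]
    by_cases h : X.Adj x y
    · rw [if_pos h, if_pos ⟨x, by simp, y, by simp, h⟩]
    · rw [if_neg h, if_neg ?_]
      rintro ⟨p, hp, q, hq, hpq⟩
      simp only [Finset.mem_insert, Finset.mem_singleton] at hp hq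
      rcases hp with rfl | rfl <;> rcases hq with rfl | rfl
      · exact hpq.ne rfl
      · exact h hpq
      · exact h hpq.symm
      · exact hpq.ne rfl
  set z : {s : Finset (Fin v) // s.card = 2} → ℝ := fun t => F t.1 with hzdef
  have hzpos : ∀ t, 0 < z t := by
    intro t
    simp only [hzdef, hFdef]
    split
    · exact hapos
    · exact hbpos
  have heig : ∀ s : {s : Finset (Fin v) // s.card = 2},
      ((symSq X).adjMatrix ℝ).mulVec z s = lam * z s := by
    intro s
    obtain ⟨u, w, hne, hsval⟩ := Finset.card_eq_two.mp s.2
    have hs2 : ({u, w} : Finset (Fin v)).card = 2 := Finset.card_pair hne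
    have hseq : s = ⟨{u, w}, hs2⟩ := Subtype.ext hsval
    rw [hseq]
    rw [SimpleGraph.adjMatrix_mulVec_apply]
    have hnbr : (symSq X).neighborFinset ⟨{u, w}, hs2⟩
        = Finset.univ.filter ((symSq X).Adj ⟨{u, w}, hs2⟩) := by
      ext t; simp [SimpleGraph.mem_neighborFinset]
    rw [hnbr, Finset.sum_filter]
    have hstep1 : ∀ t : {s : Finset (Fin v) // s.card = 2},
        (if (symSq X).Adj ⟨{u, w}, hs2⟩ t then z t else 0)
          = (if ∃ x, (x ∉ ({u, w} : Finset (Fin v)) ∧ X.Adj x w) ∧ t.1 = {u, x}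
              then F t.1 else 0)
            + (if ∃ x, (x ∉ ({u, w} : Finset (Fin v)) ∧ X.Adj x u) ∧ t.1 = {w, x}
              then F t.1 else 0) := by
      intro t
      have hiff : (symSq X).Adj ⟨{u, w}, hs2⟩ t ↔
          ((∃ x, (x ∉ ({u, w} : Finset (Fin v)) ∧ X.Adj x w) ∧ t.1 = {u, x})
            ∨ (∃ x, (x ∉ ({u, w} : Finset (Fin v)) ∧ X.Adj x u) ∧ t.1 = {w, x})) := by
        rw [symSq_adj_char X hne hs2 t]
        constructor
        · rintro (⟨x, h1, h2, h3⟩ | ⟨x, h1, h2, h3⟩)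
          · exact Or.inl ⟨x, ⟨h1, h2⟩, h3⟩
          · exact Or.inr ⟨x, ⟨h1, h2⟩, h3⟩
        · rintro (⟨x, ⟨h1, h2⟩, h3⟩ | ⟨x, ⟨h1, h2⟩, h3⟩)
          · exact Or.inl ⟨x, h1, h2, h3⟩
          · exact Or.inr ⟨x, h1, h2, h3⟩
      rw [if_congr hiff rfl rfl]
      have hdisj : ¬((∃ x, (x ∉ ({u, w} : Finset (Fin v)) ∧ X.Adj x w) ∧ t.1 = {u, x})
          ∧ (∃ x, (x ∉ ({u, w} : Finset (Fin v)) ∧ X.Adj x u) ∧ t.1 = {w, x})) := by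
        rintro ⟨⟨x, ⟨hx1, -⟩, hx2⟩, ⟨y, ⟨hy1, -⟩, hy2⟩⟩
        have : w ∈ ({u, x} : Finset (Fin v)) := by
          rw [← hx2, hy2]; simp
        simp only [Finset.mem_insert, Finset.mem_singleton] at this
        rcases this with h | h
        · exact hne h.symm
        · exact hx1 (by simp [← h])
      by_cases hP : ∃ x, (x ∉ ({u, w} : Finset (Fin v)) ∧ X.Adj x w) ∧ t.1 = {u, x} <;>
        by_cases hQ : ∃ x, (x ∉ ({u, w} : Finset (Fin v)) ∧ X.Adj x u) ∧ t.1 = {w, x}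
      · exact absurd ⟨hP, hQ⟩ hdisj
      · rw [if_pos (Or.inl hP), if_pos hP, if_neg hQ, add_zero]
      · rw [if_pos (Or.inr hQ), if_neg hP, if_pos hQ, zero_add]
      · rw [if_neg ?_, if_neg hP, if_neg hQ, add_zero]
        rintro (h | h)
        · exact hP h
        · exact hQ h
    rw [show ∑ t : {s : Finset (Fin v) // s.card = 2},
        (if (symSq X).Adj ⟨{u, w}, hs2⟩ t then z t else 0)
        = ∑ t : {s : Finset (Fin v) // s.card = 2},
          ((if ∃ x, (x ∉ ({u, w} : Finset (Fin v)) ∧ X.Adj x w) ∧ t.1 = {u, x}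
              then F t.1 else 0)
            + (if ∃ x, (x ∉ ({u, w} : Finset (Fin v)) ∧ X.Adj x u) ∧ t.1 = {w, x}
              then F t.1 else 0))
      from Finset.sum_congr rfl (fun t _ => hstep1 t), Finset.sum_add_distrib]
    have hsum1 : ∑ t : {s : Finset (Fin v) // s.card = 2},
        (if ∃ x, (x ∉ ({u, w} : Finset (Fin v)) ∧ X.Adj x w) ∧ t.1 = {u, x} then F t.1 else 0)
        = ∑ x : Fin v, (if x ∉ ({u, w} : Finset (Fin v)) ∧ X.Adj x w then F {u, x} else 0) :=
      sum_twoSet_pair u w _ (fun x hx => hx.1) F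
    have hsum2 : ∑ t : {s : Finset (Fin v) // s.card = 2},
        (if ∃ x, (x ∉ ({u, w} : Finset (Fin v)) ∧ X.Adj x u) ∧ t.1 = {w, x} then F t.1 else 0)
        = ∑ x : Fin v, (if x ∉ ({u, w} : Finset (Fin v)) ∧ X.Adj x u then F {w, x} else 0) :=
      sum_twoSet_pair w u _ (fun x hx => by rw [Finset.pair_comm]; exact hx.1) F
    rw [hsum1, hsum2]
    simp only [hFpair]
    have hpairsw : (∑ x : Fin v, (if x ∉ ({u, w} : Finset (Fin v)) ∧ X.Adj x u
          then (if X.Adj w x then α else β) else 0))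
        = (∑ x : Fin v, (if x ∉ ({w, u} : Finset (Fin v)) ∧ X.Adj x u
          then (if X.Adj w x then α else β) else 0)) := by
      rw [Finset.pair_comm u w]
    rw [hpairsw]
    by_cases hadj : X.Adj u w
    · rw [oneSide_sum hX.regular hne (hX.of_adj u w hadj) α β]
      rw [oneSide_sum hX.regular hne.symm (hX.of_adj w u hadj.symm) α β]
      rw [if_pos hadj, if_pos hadj.symm]
      have hz : z ⟨{u, w}, hs2⟩ = α := by
        simp only [hzdef]; rw [hFpair u w, if_pos hadj]
      rw [hz]
      have halg := eigen_alg_adj (k : ℝ) (a : ℝ) (c : ℝ) r hr2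
      rw [halphadef, hbetadef, hlamdef]
      linarith [halg]
    · rw [oneSide_sum hX.regular hne (hX.of_not_adj hne hadj) α β]
      rw [oneSide_sum hX.regular hne.symm (hX.of_not_adj hne.symm (fun h => hadj h.symm)) α β]
      rw [if_neg hadj, if_neg (fun h => hadj (SimpleGraph.Adj.symm h))]
      have hz : z ⟨{u, w}, hs2⟩ = β := by
        simp only [hzdef]; rw [hFpair u w, if_neg hadj]
      rw [hz]
      rw [halphadef, hbetadef, hlamdef]
      ring
  constructor
  · refine ⟨z, ?_, ?_⟩
    · obtain ⟨u, w, hne, -⟩ := hnonadj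
      intro h
      exact (hzpos ⟨{u, w}, Finset.card_pair hne⟩).ne'
        (congrFun h ⟨{u, w}, Finset.card_pair hne⟩)
    · funext s
      rw [Pi.smul_apply, smul_eq_mul]
      exact heig s
  · intro ν zz hzz hmv
    set A := (symSq X).adjMatrix ℝ with hAdef
    have hAnn : ∀ s t, 0 ≤ A s t := by
      intro s t
      rw [hAdef, SimpleGraph.adjMatrix_apply]
      split <;> norm_num
    have hcomp : ∀ s, |ν| * |zz s| ≤ A.mulVec (fun t => |zz t|) s := by
      intro s
      have h1 : |ν| * |zz s| = |(A.mulVec zz) s| := by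
        rw [hmv, Pi.smul_apply, smul_eq_mul, abs_mul]
      rw [h1]
      show |∑ t, A s t * zz t| ≤ ∑ t, A s t * |zz t|
      refine le_trans (Finset.abs_sum_le_sum_abs _ _) ?_
      apply Finset.sum_le_sum
      intro t _
      rw [abs_mul, abs_of_nonneg (hAnn s t)]
    have hS : ∀ t ∈ (Finset.univ : Finset {s : Finset (Fin v) // s.card = 2}),
        0 ≤ z t * |zz t| := fun t _ => mul_nonneg (hzpos t).le (abs_nonneg _)
    obtain ⟨t0, ht0⟩ := Function.ne_iff.mp hzz
    have hpos : 0 < ∑ t, z t * |zz t| := by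
      apply Finset.sum_pos' hS
      exact ⟨t0, Finset.mem_univ _, mul_pos (hzpos t0) (abs_pos.mpr ht0)⟩
    have h2 : ∑ t, z t * (A.mulVec (fun t => |zz t|) t) = lam * ∑ t, z t * |zz t| := by
      have hd : dotProduct z (A.mulVec (fun t => |zz t|))
          = dotProduct (Matrix.vecMul z A) (fun t => |zz t|) :=
        Matrix.dotProduct_mulVec z A _
      have hvm : Matrix.vecMul z A = A.mulVec z := by
        have hsym : A.transpose = A := by
          rw [hAdef]; exact (SimpleGraph.isSymm_adjMatrix (symSq X)).eq
        rw [← Matrix.mulVec_transpose, hsym]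
      have hmz : A.mulVec z = lam • z := funext fun s => by
        rw [Pi.smul_apply, smul_eq_mul]; exact heig s
      calc ∑ t, z t * (A.mulVec (fun t => |zz t|) t)
          = dotProduct z (A.mulVec (fun t => |zz t|)) := rfl
        _ = dotProduct (Matrix.vecMul z A) (fun t => |zz t|) := hd
        _ = dotProduct (lam • z) (fun t => |zz t|) := by rw [hvm, hmz]
        _ = lam * dotProduct z (fun t => |zz t|) := smul_dotProduct lam z _
        _ = lam * ∑ t, z t * |zz t| := rfl
    have h3 : |ν| * ∑ t, z t * |zz t| ≤ ∑ t, z t * (A.mulVec (fun t => |zz t|) t) := by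
      calc |ν| * ∑ t, z t * |zz t| = ∑ t, z t * (|ν| * |zz t|) := by
            rw [Finset.mul_sum]
            exact Finset.sum_congr rfl (fun t _ => by ring)
        _ ≤ ∑ t, z t * (A.mulVec (fun t => |zz t|) t) := by
            apply Finset.sum_le_sum
            intro t _
            exact mul_le_mul_of_nonneg_left (hcomp t) (hzpos t).le
      
    have := h3.trans (le_of_eq h2)
    exact (mul_le_mul_iff_of_pos_right hpos).mp this
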